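/- Let n ≥ 1 and let u₁,…,uₙ, p₁,…,pₙ, q₁,…,qₙ, q'₁,…,q'ₙ be positive real numbers, and let p'₁,…,p'ₙ be real numbers satisfying pᵢ + uᵢ·p'ᵢ > 0 for every i. Define the diffusion matrix A ∈ ℝ^{n×n} of the volume-filling model by A_{ij} = δ_{ij}·(pᵢqᵢ + uᵢqᵢp'ᵢ) + uᵢpᵢq'ᵢ (i.e., A_{ij} = δ_{ij}·pᵢqᵢ + uᵢpᵢq'ᵢ + δ_{ij}·uᵢqᵢp'ᵢ). Then A is normally elliptic and diagonalizable over ℝ with all eigenvalues real and positive. -/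

import Mathlib

open Matrix

/-- A real square matrix is *normally elliptic* if every eigenvalue
(i.e. every element of the spectrum of the associated complex matrix)
has positive real part. -/
def NormallyElliptic {n : ℕ} (A : Matrix (Fin n) (Fin n) ℝ) : Prop :=
  ∀ μ ∈ spectrum ℂ (A.map Complex.ofReal), 0 < μ.re

/-- A real matrix of the form `δ_{ij} aᵢ + bᵢbⱼ` with `aᵢ > 0` is positive definite. -/
lemma posDef_aux {n : ℕ} (a b : Fin n → ℝ) (ha : ∀ i, 0 < a i) :
    (Matrix.of fun i j => (if i = j then a i else 0) + b i * b j).PosDef := by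
  refine posDef_iff_dotProduct_mulVec.mpr ⟨?_, ?_⟩
  · ext i j
    simp only [conjTranspose_apply, of_apply, star_trivial]
    rcases eq_or_ne i j with h | h
    · subst h; ring
    · rw [if_neg (Ne.symm h), if_neg h]
      ring
  · intro x hx
    have h1 : ∀ i, (∑ j, ((if i = j then a i else 0) + b i * b j) * x j)
        = a i * x i + b i * ∑ j, b j * x j := by
      intro i
      have e0 : ∑ j, ((if i = j then a i else 0) + b i * b j) * x j
          = ∑ j, ((if i = j then a i * x j else 0) + b i * (b j * x j)) :=
        Finset.sum_congr rfl fun j _ => by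
          rcases eq_or_ne i j with h | h <;> simp [h] <;> ring
      rw [e0, Finset.sum_add_distrib, ← Finset.mul_sum]
      simp
    have hQ : dotProduct (star x)
        ((Matrix.of fun i j => (if i = j then a i else 0) + b i * b j) *ᵥ x)
        = (∑ i, a i * x i ^ 2) + (∑ i, b i * x i) ^ 2 := by
      simp only [star_trivial, dotProduct, mulVec, of_apply, h1]
      have e1 : ∑ i, x i * (a i * x i + b i * ∑ j, b j * x j)
          = ∑ i, (a i * x i ^ 2 + (b i * x i) * ∑ j, b j * x j) :=
        Finset.sum_congr rfl fun i _ => by ring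
      have e2 : (∑ j, b j * x j) = ∑ i, b i * x i := rfl
      rw [e1, Finset.sum_add_distrib, ← Finset.sum_mul, sq, e2]
    rw [hQ]
    obtain ⟨k, hk⟩ := Function.ne_iff.mp hx
    have hk' : x k ≠ 0 := by simpa using hk
    have h2 : 0 < ∑ i, a i * x i ^ 2 := by
      refine Finset.sum_pos' (fun i _ => mul_nonneg (ha i).le (sq_nonneg _))
        ⟨k, Finset.mem_univ k, mul_pos (ha k) (by positivity)⟩
    nlinarith [sq_nonneg (∑ i, b i * x i)]

/-- The diffusion matrix of the volume-filling model,
`A_{ij} = δ_{ij}(pᵢqᵢ + uᵢqᵢp'ᵢ) + uᵢpᵢq'ᵢ`, is normally elliptic and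
diagonalizable over ℝ with positive eigenvalues, provided
`uᵢ, pᵢ, qᵢ, q'ᵢ > 0` and `pᵢ + uᵢp'ᵢ > 0`. -/
theorem volumeFilling_normallyElliptic_and_diagonalizable {n : ℕ} (hn : 1 ≤ n)
    (u p q q' : Fin n → ℝ) (p' : Fin n → ℝ)
    (hu : ∀ i, 0 < u i) (hp : ∀ i, 0 < p i)
    (hq : ∀ i, 0 < q i) (hq' : ∀ i, 0 < q' i)
    (hpp' : ∀ i, 0 < p i + u i * p' i) :
    NormallyElliptic (Matrix.of fun i j =>
      (if i = j then p i * q i + u i * q i * p' i else 0) + u i * p i * q' i) ∧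
    ∃ P Λ : Matrix (Fin n) (Fin n) ℝ,
      IsUnit P.det ∧ Λ.IsDiag ∧ (∀ i, 0 < Λ i i) ∧
      (Matrix.of fun i j =>
        (if i = j then p i * q i + u i * q i * p' i else 0) + u i * p i * q' i)
        = P * Λ * P⁻¹ := by
  set A : Matrix (Fin n) (Fin n) ℝ := Matrix.of fun i j =>
      (if i = j then p i * q i + u i * q i * p' i else 0) + u i * p i * q' i with hA
  -- the positive weights
  set l : Fin n → ℝ := fun i => u i * p i * q' i with hldef
  have hl : ∀ i, 0 < l i := fun i => by
    have := hu i; have := hp i; have := hq' i; positivity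
  set a : Fin n → ℝ := fun i => q i * (p i + u i * p' i) with hadef
  have ha : ∀ i, 0 < a i := fun i => mul_pos (hq i) (hpp' i)
  set b : Fin n → ℝ := fun i => Real.sqrt (l i) with hbdef
  have hb : ∀ i, 0 < b i := fun i => Real.sqrt_pos.mpr (hl i)
  have hbb : ∀ i, b i * b i = l i := fun i => Real.mul_self_sqrt (hl i).le
  -- the symmetric positive definite matrix M and the diagonal scaling D
  set M : Matrix (Fin n) (Fin n) ℝ :=
      Matrix.of (fun i j => (if i = j then a i else 0) + b i * b j) with hMdef
  have hM : M.PosDef := posDef_aux a b ha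
  have hHerm : M.IsHermitian := hM.isHermitian
  set D : Matrix (Fin n) (Fin n) ℝ := diagonal b with hDdef
  have hDdet : IsUnit D.det := by
    rw [hDdef, det_diagonal]
    exact (Finset.prod_pos fun i _ => hb i).ne'.isUnit
  -- the eigen-decomposition of M
  set V : Matrix (Fin n) (Fin n) ℝ := (hHerm.eigenvectorUnitary : Matrix (Fin n) (Fin n) ℝ)
    with hVdef
  have hVV : V * star V = 1 := (Matrix.mem_unitaryGroup_iff).mp hHerm.eigenvectorUnitary.2
  have hVinv : V⁻¹ = star V := (Matrix.inv_eq_right_inv hVV)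
  have hVdet : IsUnit V.det := by
    have := congrArg Matrix.det hVV
    rw [det_mul, det_one] at this
    exact IsUnit.of_mul_eq_one _ this
  set ev : Fin n → ℝ := hHerm.eigenvalues with hevdef
  have hev : ∀ i, 0 < ev i := fun i => hM.eigenvalues_pos i
  have hspec : M = V * diagonal ev * V⁻¹ := by
    rw [hVinv]
    have h := hHerm.spectral_theorem
    have : (RCLike.ofReal ∘ ev : Fin n → ℝ) = ev := by
      funext i; simp [RCLike.ofReal]
    rw [this] at h
    exact h
  -- A = D M D⁻¹
  have hbbi : ∀ i, b i * b i = u i * p i * q' i := fun i => hbb i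
  have hAD : A * D = D * M := by
    ext i j
    rw [hDdef, mul_diagonal, diagonal_mul]
    simp only [hA, hMdef, of_apply]
    rcases eq_or_ne i j with h | h
    · subst h
      rw [if_pos rfl, if_pos rfl, hbbi i]
      simp only [hadef]
      ring
    · rw [if_neg h, if_neg h, ← hbbi i]
      ring
  have hAeq : A = D * M * D⁻¹ := by
    rw [← hAD, Matrix.mul_nonsing_inv_cancel_right _ _ hDdet]
  set P : Matrix (Fin n) (Fin n) ℝ := D * V with hPdef
  have hPdet : IsUnit P.det := by
    rw [hPdef, det_mul]
    exact hDdet.mul hVdet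
  have hfinal : A = P * diagonal ev * P⁻¹ := by
    rw [hAeq, hspec, hPdef, Matrix.mul_inv_rev]
    noncomm_ring
  constructor
  · -- normal ellipticity
    intro μ hμ
    set f : ℝ →+* ℂ := Complex.ofRealHom with hf
    have hPcdet : IsUnit ((P.map f).det) := by
      rw [← RingHom.mapMatrix_apply, ← RingHom.map_det]
      exact hPdet.map f
    have hPcinv : (P.map f)⁻¹ = P⁻¹.map f := by
      refine Matrix.inv_eq_right_inv ?_
      rw [← Matrix.map_mul, Matrix.mul_nonsing_inv _ hPdet]
      exact Matrix.map_one f (map_zero f) (map_one f)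
    have hmap : A.map Complex.ofReal
        = (P.map f) * diagonal (fun i => (ev i : ℂ)) * (P.map f)⁻¹ := by
      have : A.map Complex.ofReal = A.map f := rfl
      rw [this, hfinal, Matrix.map_mul, Matrix.map_mul, hPcinv]
      congr 1
      congr 1
      rw [diagonal_map (map_zero f)]
      rfl
    rw [hmap] at hμ
    set U : (Matrix (Fin n) (Fin n) ℂ)ˣ := ((Matrix.isUnit_iff_isUnit_det _).mpr hPcdet).unit
      with hU
    have hUc : (U : Matrix (Fin n) (Fin n) ℂ) = P.map f := rfl
    have hUinv : ((U⁻¹ : (Matrix (Fin n) (Fin n) ℂ)ˣ) : Matrix (Fin n) (Fin n) ℂ)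
        = (P.map f)⁻¹ := by
      rw [Matrix.coe_units_inv, hUc]
    rw [← hUinv, ← hUc, spectrum.units_conjugate, spectrum_diagonal] at hμ
    obtain ⟨i, hi⟩ := hμ
    rw [← hi]
    simpa using hev i
  · exact ⟨P, diagonal ev, hPdet, isDiag_diagonal ev,
      fun i => by simpa using hev i, hfinal⟩
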